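/- arXiv:nlin/0206018 — 2 statements merged into one kernel-verified Lean document; each statement's English description precedes it below -/
import Mathlib

section
/- Fix a > 0, λ ∈ ℝ, and t > 0. Then F_a(λ, n) with ε = t/n converges to the Mittag-Leffler function E_a(λ t^a) = Σ_{j=0}^∞ λ^j t^{aj}/Γ(aj+1) as n → ∞. -/
open Real Filter

/-- Upper Gamma ratio bound from log-convexity. -/
lemma my_gamma_upper (x s : ℝ) (hx : 1 < x) (hs : 0 ≤ s) :
    Real.Gamma (x + s) ≤ Real.Gamma x * (x + s) ^ s := by
  rcases hs.eq_or_lt with rfl | hs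
  · simp
  have hx0 : (0:ℝ) < x := by linarith
  have hxs : (0:ℝ) < x + s := by linarith
  have hG1 : 0 < Real.Gamma x := Real.Gamma_pos_of_pos hx0
  have hG2 : 0 < Real.Gamma (x + s) := Real.Gamma_pos_of_pos hxs
  have h := Real.convexOn_log_Gamma.slope_mono_adjacent (Set.mem_Ioi.2 hx0)
    (Set.mem_Ioi.2 (show (0:ℝ) < x + s + 1 by linarith))
    (show x < x + s by linarith) (show x + s < x + s + 1 by linarith)
  simp only [Function.comp] at h
  rw [Real.Gamma_add_one hxs.ne', Real.log_mul hxs.ne' hG2.ne'] at h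
  rw [show x + s - x = s by ring, show x + s + 1 - (x + s) = 1 by ring] at h
  have h2 : Real.log (Real.Gamma (x + s)) ≤ Real.log (Real.Gamma x) + Real.log (x + s) * s := by
    rw [div_le_iff₀ hs] at h
    nlinarith
  calc Real.Gamma (x + s) = Real.exp (Real.log (Real.Gamma (x + s))) := (Real.exp_log hG2).symm
    _ ≤ Real.exp (Real.log (Real.Gamma x) + Real.log (x + s) * s) := Real.exp_le_exp.2 h2
    _ = Real.Gamma x * (x + s) ^ s := by
        rw [Real.exp_add, Real.exp_log hG1, Real.rpow_def_of_pos hxs]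

/-- Lower Gamma ratio bound from log-convexity. -/
lemma my_gamma_lower (x s : ℝ) (hx : 1 < x) (hs : 0 ≤ s) :
    Real.Gamma x * (x - 1) ^ s ≤ Real.Gamma (x + s) := by
  rcases hs.eq_or_lt with rfl | hs
  · simp
  have hx0 : (0:ℝ) < x := by linarith
  have hx1 : (0:ℝ) < x - 1 := by linarith
  have hxs : (0:ℝ) < x + s := by linarith
  have hG1 : 0 < Real.Gamma x := Real.Gamma_pos_of_pos hx0
  have hG0 : 0 < Real.Gamma (x - 1) := Real.Gamma_pos_of_pos hx1
  have hG2 : 0 < Real.Gamma (x + s) := Real.Gamma_pos_of_pos hxs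
  have h := Real.convexOn_log_Gamma.slope_mono_adjacent (Set.mem_Ioi.2 hx1)
    (Set.mem_Ioi.2 hxs) (show x - 1 < x by linarith) (show x < x + s by linarith)
  simp only [Function.comp] at h
  have hGx : Real.Gamma x = (x - 1) * Real.Gamma (x - 1) := by
    have := Real.Gamma_add_one hx1.ne'
    rw [show x - 1 + 1 = x by ring] at this
    exact this
  rw [show x - (x - 1) = 1 by ring, show x + s - x = s by ring] at h
  nth_rewrite 1 [hGx] at h
  rw [Real.log_mul hx1.ne' hG0.ne'] at h
  have h2 : Real.log (Real.Gamma x) + Real.log (x - 1) * s ≤ Real.log (Real.Gamma (x + s)) := by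
    rw [le_div_iff₀ hs] at h
    nlinarith
  calc Real.Gamma x * (x - 1) ^ s
      = Real.exp (Real.log (Real.Gamma x) + Real.log (x - 1) * s) := by
        rw [Real.exp_add, Real.exp_log hG1, Real.rpow_def_of_pos hx1]
    _ ≤ Real.exp (Real.log (Real.Gamma (x + s))) := Real.exp_le_exp.2 h2
    _ = Real.Gamma (x + s) := Real.exp_log hG2

/-- normalized ratio upper bound -/
lemma my_r_le (x s : ℝ) (hx : 1 < x) (hs : 0 ≤ s) :
    Real.Gamma (x + s) / (Real.Gamma x * x ^ s) ≤ ((x + s) / x) ^ s := by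
  have hx0 : (0:ℝ) < x := by linarith
  have hG1 : 0 < Real.Gamma x := Real.Gamma_pos_of_pos hx0
  have hxp : (0:ℝ) < x ^ s := Real.rpow_pos_of_pos hx0 s
  rw [div_le_iff₀ (by positivity), Real.div_rpow (by linarith) hx0.le, div_mul_eq_mul_div, le_div_iff₀ hxp]
  have := my_gamma_upper x s hx hs
  nlinarith [hxp.le]

lemma my_r_ge (x s : ℝ) (hx : 1 < x) (hs : 0 ≤ s) :
    ((x - 1) / x) ^ s ≤ Real.Gamma (x + s) / (Real.Gamma x * x ^ s) := by
  have hx0 : (0:ℝ) < x := by linarith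
  have hG1 : 0 < Real.Gamma x := Real.Gamma_pos_of_pos hx0
  have hxp : (0:ℝ) < x ^ s := Real.rpow_pos_of_pos hx0 s
  rw [le_div_iff₀ (by positivity), Real.div_rpow (by linarith) hx0.le, div_mul_eq_mul_div, div_le_iff₀ hxp]
  have := my_gamma_lower x s hx hs
  nlinarith [hxp.le]

lemma my_tendsto_r (s : ℝ) (hs : 0 ≤ s) :
    Tendsto (fun n : ℕ => Real.Gamma ((n:ℝ) + s) / (Real.Gamma (n:ℝ) * (n:ℝ) ^ s))
      atTop (nhds 1) := by
  have h1n : Tendsto (fun n : ℕ => 1 / (n:ℝ)) atTop (nhds 0) :=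
    tendsto_one_div_atTop_nhds_zero_nat
  have hlow0 : Tendsto (fun n : ℕ => ((n:ℝ) - 1) / n) atTop (nhds 1) := by
    have h : Tendsto (fun n : ℕ => 1 - 1 / (n:ℝ)) atTop (nhds 1) := by
      simpa using tendsto_const_nhds.sub h1n
    refine h.congr' ?_
    filter_upwards [eventually_ge_atTop 1] with n hn
    have hn0 : ((n:ℝ)) ≠ 0 := by
      have : (0:ℝ) < (n:ℝ) := by exact_mod_cast Nat.pos_of_ne_zero (by omega)
      exact this.ne'
    field_simp
  have hup0 : Tendsto (fun n : ℕ => ((n:ℝ) + s) / n) atTop (nhds 1) := by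
    have h : Tendsto (fun n : ℕ => 1 + s * (1 / (n:ℝ))) atTop (nhds 1) := by
      simpa using tendsto_const_nhds.add (tendsto_const_nhds.mul h1n)
    refine h.congr' ?_
    filter_upwards [eventually_ge_atTop 1] with n hn
    have hn0 : ((n:ℝ)) ≠ 0 := by
      have : (0:ℝ) < (n:ℝ) := by exact_mod_cast Nat.pos_of_ne_zero (by omega)
      exact this.ne'
    field_simp
  have hc : ContinuousAt (fun x : ℝ => x ^ s) 1 :=
    Real.continuousAt_rpow_const 1 s (Or.inl one_ne_zero)
  have hlow : Tendsto (fun n : ℕ => (((n:ℝ) - 1) / n) ^ s) atTop (nhds 1) := by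
    have := hc.tendsto.comp hlow0
    simpa [Real.one_rpow, Function.comp_def] using this
  have hup : Tendsto (fun n : ℕ => (((n:ℝ) + s) / n) ^ s) atTop (nhds 1) := by
    have := hc.tendsto.comp hup0
    simpa [Real.one_rpow, Function.comp_def] using this
  refine tendsto_of_tendsto_of_tendsto_of_le_of_le' hlow hup ?_ ?_
  · filter_upwards [eventually_ge_atTop 2] with n hn
    have hx : (1:ℝ) < (n:ℝ) := by exact_mod_cast (by omega : 1 < n)
    exact my_r_ge (n:ℝ) s hx hs
  · filter_upwards [eventually_ge_atTop 2] with n hn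
    have hx : (1:ℝ) < (n:ℝ) := by exact_mod_cast (by omega : 1 < n)
    exact my_r_le (n:ℝ) s hx hs

/-- Key inequality for the ratio test on the dominating series. -/
lemma my_key (a t lam : ℝ) (ha : 0 < a) (ht : 0 < t) (N : ℝ) (hN : 1 < N)
    (hlt : |lam| * (2 * t * Real.exp 1 / N) ^ a ≤ 1 / 2) (s : ℝ) (hs : 0 < s)
    (hsN : N + a ≤ s) :
    |lam| * t ^ a * ((N + s + a) / N) ^ (s + a) * Real.Gamma (s + 1) ≤
      1 / 2 * ((N + s) / N) ^ s * Real.Gamma (s + a + 1) := by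
  have hN0 : (0:ℝ) < N := by linarith
  have hNs : (0:ℝ) < N + s := by linarith
  have hNsa : (0:ℝ) < N + s + a := by linarith
  have hG1 : 0 < Real.Gamma (s + 1) := Real.Gamma_pos_of_pos (by linarith)
  -- split the big power
  have h1 : ((N + s + a) / N) ^ (s + a)
      = ((N + s) / N) ^ s * (((N + s + a) / (N + s)) ^ s * ((N + s + a) / N) ^ a) := by
    have e1 : (N + s + a) / N = (N + s) / N * ((N + s + a) / (N + s)) := by
      field_simp
    calc ((N + s + a) / N) ^ (s + a)
        = ((N + s + a) / N) ^ s * ((N + s + a) / N) ^ a := Real.rpow_add (by positivity) s a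
      _ = ((N + s) / N * ((N + s + a) / (N + s))) ^ s * ((N + s + a) / N) ^ a := by rw [← e1]
      _ = ((N + s) / N) ^ s * (((N + s + a) / (N + s)) ^ s * ((N + s + a) / N) ^ a) := by
          rw [Real.mul_rpow (by positivity) (by positivity)]; ring
  -- exp bound
  have h2 : ((N + s + a) / (N + s)) ^ s ≤ Real.exp a := by
    have hb : (N + s + a) / (N + s) = 1 + a / (N + s) := by field_simp
    have hb2 : (N + s + a) / (N + s) ≤ Real.exp (a / (N + s)) := by
      rw [hb]
      have := Real.add_one_le_exp (a / (N + s))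
      linarith
    calc ((N + s + a) / (N + s)) ^ s ≤ (Real.exp (a / (N + s))) ^ s :=
          Real.rpow_le_rpow (by positivity) hb2 hs.le
      _ = Real.exp (a / (N + s) * s) := (Real.exp_mul _ _).symm
      _ ≤ Real.exp a := by
          apply Real.exp_le_exp.2
          rw [div_mul_eq_mul_div, div_le_iff₀ hNs]
          nlinarith
  -- base bound
  have h3 : ((N + s + a) / N) ^ a ≤ (2 * s / N) ^ a := by
    apply Real.rpow_le_rpow (by positivity) _ ha.le
    gcongr
    linarith
  -- Gamma lower bound
  have h4 : Real.Gamma (s + 1) * s ^ a ≤ Real.Gamma (s + a + 1) := by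
    have := my_gamma_lower (s + 1) a (by linarith) ha.le
    rw [show s + 1 - 1 = s by ring, show s + 1 + a = s + a + 1 by ring] at this
    exact this
  -- combine exponentials into the hypothesis form
  have h5 : t ^ a * (2 * s / N) ^ a * Real.exp a = (2 * t * Real.exp 1 / N) ^ a * s ^ a := by
    rw [← Real.exp_one_rpow a, ← Real.mul_rpow ht.le (by positivity),
      ← Real.mul_rpow (by positivity) (Real.exp_pos 1).le,
      ← Real.mul_rpow (by positivity) hs.le]
    congr 1
    field_simp
  calc |lam| * t ^ a * ((N + s + a) / N) ^ (s + a) * Real.Gamma (s + 1)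
      = ((N + s) / N) ^ s * Real.Gamma (s + 1) *
          (|lam| * (t ^ a * (((N + s + a) / (N + s)) ^ s * ((N + s + a) / N) ^ a))) := by
        rw [h1]; ring
    _ ≤ ((N + s) / N) ^ s * Real.Gamma (s + 1) *
          (|lam| * (t ^ a * (Real.exp a * (2 * s / N) ^ a))) := by
        gcongr
    _ = ((N + s) / N) ^ s * Real.Gamma (s + 1) *
          (|lam| * ((2 * t * Real.exp 1 / N) ^ a * s ^ a)) := by
        rw [show t ^ a * (Real.exp a * (2 * s / N) ^ a)
            = t ^ a * (2 * s / N) ^ a * Real.exp a by ring, h5]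
    _ ≤ ((N + s) / N) ^ s * Real.Gamma (s + 1) * (1 / 2 * s ^ a) := by
        rw [← mul_assoc |lam|]
        gcongr
    _ = 1 / 2 * ((N + s) / N) ^ s * (Real.Gamma (s + 1) * s ^ a) := by ring
    _ ≤ 1 / 2 * ((N + s) / N) ^ s * Real.Gamma (s + a + 1) := by
        gcongr


/-- With `ε = t/n`, `F_a(λ, n) → E_a(λ t^a)` as `n → ∞`. -/
theorem stmt_5 (a lam t : ℝ) (ha : 0 < a) (ht : 0 < t)
    (hconv : ∀ n : ℕ, Summable (fun j : ℕ =>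
      lam ^ j * (t / n) ^ (a * j) * Real.Gamma ((n : ℝ) + a * j) /
        (Real.Gamma (a * j + 1) * Real.Gamma (n : ℝ))))
    (hE : Summable fun j : ℕ => lam ^ j * t ^ (a * j) / Real.Gamma (a * j + 1)) :
    Filter.Tendsto
      (fun n : ℕ => ∑' j : ℕ,
        lam ^ j * (t / n) ^ (a * j) * Real.Gamma ((n : ℝ) + a * j) /
          (Real.Gamma (a * j + 1) * Real.Gamma (n : ℝ)))
      Filter.atTop
      (nhds (∑' j : ℕ, lam ^ j * t ^ (a * j) / Real.Gamma (a * j + 1))) := by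
  clear hconv hE
  -- choose a large `N`
  obtain ⟨N, hN2, hNlt⟩ : ∃ N : ℕ, 2 ≤ N ∧
      |lam| * (2 * t * Real.exp 1 / (N : ℝ)) ^ a < 1 / 2 := by
    have hdiv : Tendsto (fun N : ℕ => 2 * t * Real.exp 1 / (N : ℝ)) atTop (nhds 0) :=
      Tendsto.div_atTop tendsto_const_nhds tendsto_natCast_atTop_atTop
    have hc : ContinuousAt (fun x : ℝ => x ^ a) 0 :=
      Real.continuousAt_rpow_const 0 a (Or.inr ha.le)
    have hrpow : Tendsto (fun N : ℕ => (2 * t * Real.exp 1 / (N : ℝ)) ^ a) atTop (nhds 0) := by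
      have := hc.tendsto.comp hdiv
      simpa [Real.zero_rpow ha.ne', Function.comp_def] using this
    have hmul : Tendsto (fun N : ℕ => |lam| * (2 * t * Real.exp 1 / (N : ℝ)) ^ a)
        atTop (nhds 0) := by simpa using tendsto_const_nhds.mul hrpow
    have h1 := hmul.eventually (gt_mem_nhds (show (0:ℝ) < 1/2 by norm_num))
    exact ((eventually_ge_atTop 2).and h1).exists
  have hN0 : (0:ℝ) < N := by exact_mod_cast Nat.pos_of_ne_zero (by omega)
  have hN1 : (1:ℝ) < N := by exact_mod_cast (by omega : 1 < N)
  have hGj : ∀ j : ℕ, 0 < Real.Gamma (a * j + 1) := fun j =>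
    Real.Gamma_pos_of_pos (by positivity)
  set g : ℕ → ℝ := fun j => lam ^ j * t ^ (a * j) / Real.Gamma (a * j + 1) with hgdef
  set bound : ℕ → ℝ := fun j =>
    |lam| ^ j * t ^ (a * j) * (((N:ℝ) + a * j) / N) ^ (a * j) / Real.Gamma (a * j + 1)
    with hbdef
  have hb_nonneg : ∀ k, 0 ≤ bound k := by
    intro k
    rw [hbdef]
    exact div_nonneg (by positivity) (hGj k).le
  -- the algebraic identity
  have hid : ∀ n : ℕ, 1 ≤ n → ∀ j : ℕ,
      lam ^ j * (t / n) ^ (a * j) * Real.Gamma ((n : ℝ) + a * j) /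
        (Real.Gamma (a * j + 1) * Real.Gamma (n : ℝ))
      = g j * (Real.Gamma ((n:ℝ) + a * j) / (Real.Gamma (n:ℝ) * (n:ℝ) ^ (a * j))) := by
    intro n hn j
    have hn0 : (0:ℝ) < n := by exact_mod_cast Nat.pos_of_ne_zero (by omega)
    have hGn : 0 < Real.Gamma (n:ℝ) := Real.Gamma_pos_of_pos hn0
    have hnp : (0:ℝ) < (n:ℝ) ^ (a * j) := Real.rpow_pos_of_pos hn0 _
    rw [hgdef, Real.div_rpow ht.le hn0.le]
    field_simp
  -- termwise convergence
  have hterm : ∀ j : ℕ, Tendsto (fun n : ℕ =>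
      lam ^ j * (t / n) ^ (a * j) * Real.Gamma ((n : ℝ) + a * j) /
        (Real.Gamma (a * j + 1) * Real.Gamma (n : ℝ))) atTop (nhds (g j)) := by
    intro j
    have h1 := my_tendsto_r (a * j) (by positivity)
    have h2 : Tendsto (fun n : ℕ =>
        g j * (Real.Gamma ((n:ℝ) + a * j) / (Real.Gamma (n:ℝ) * (n:ℝ) ^ (a * j))))
        atTop (nhds (g j)) := by simpa using tendsto_const_nhds.mul h1
    apply Tendsto.congr' _ h2
    filter_upwards [eventually_ge_atTop 1] with n hn
    exact (hid n hn j).symm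
  -- uniform domination for n ≥ N
  have hbound : ∀ᶠ n : ℕ in atTop, ∀ j : ℕ,
      ‖lam ^ j * (t / n) ^ (a * j) * Real.Gamma ((n : ℝ) + a * j) /
        (Real.Gamma (a * j + 1) * Real.Gamma (n : ℝ))‖ ≤ bound j := by
    filter_upwards [eventually_ge_atTop N] with n hn j
    have hn2 : 2 ≤ n := le_trans hN2 hn
    have hn0 : (0:ℝ) < n := by exact_mod_cast Nat.pos_of_ne_zero (by omega)
    have hn1 : (1:ℝ) < n := by exact_mod_cast (by omega : 1 < n)
    have hnN : (N:ℝ) ≤ n := by exact_mod_cast hn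
    have hGn : 0 < Real.Gamma (n:ℝ) := Real.Gamma_pos_of_pos hn0
    have hnp : (0:ℝ) < (n:ℝ) ^ (a * j) := Real.rpow_pos_of_pos hn0 _
    have hs0 : (0:ℝ) ≤ a * j := by positivity
    have hGns : 0 < Real.Gamma ((n:ℝ) + a * j) := Real.Gamma_pos_of_pos (by positivity)
    rw [Real.norm_eq_abs, hid n (by omega) j, abs_mul,
      abs_of_nonneg (le_of_lt (div_pos hGns (mul_pos hGn hnp)))]
    have habs_g : |g j| = |lam| ^ j * t ^ (a * j) / Real.Gamma (a * j + 1) := by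
      rw [hgdef, abs_div, abs_mul, abs_pow,
        abs_of_pos (Real.rpow_pos_of_pos ht _), abs_of_pos (hGj j)]
    calc |g j| * (Real.Gamma ((n:ℝ) + a * j) / (Real.Gamma (n:ℝ) * (n:ℝ) ^ (a * j)))
        ≤ |g j| * (((n:ℝ) + a * j) / n) ^ (a * j) :=
          mul_le_mul_of_nonneg_left (my_r_le (n:ℝ) (a * j) hn1 hs0) (abs_nonneg _)
      _ ≤ |g j| * (((N:ℝ) + a * j) / N) ^ (a * j) := by
          apply mul_le_mul_of_nonneg_left _ (abs_nonneg _)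
          apply Real.rpow_le_rpow (by positivity) _ hs0
          rw [div_le_div_iff₀ hn0 hN0]
          nlinarith
      _ = bound j := by rw [habs_g, hbdef]; ring
  -- summability of the dominating series
  have hsum : Summable bound := by
    apply summable_of_ratio_norm_eventually_le (r := 1/2) (by norm_num)
    filter_upwards [eventually_ge_atTop (⌈((N:ℝ) + a) / a⌉₊ + 1)] with j hj
    have hj1 : 1 ≤ j := by omega
    have hjr : (⌈((N:ℝ) + a) / a⌉₊ : ℝ) ≤ j := by exact_mod_cast (by omega : ⌈((N:ℝ)+a)/a⌉₊ ≤ j)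
    have hsj : (N:ℝ) + a ≤ a * j := by
      have h1 : ((N:ℝ) + a) / a ≤ (j:ℝ) := le_trans (Nat.le_ceil _) hjr
      calc (N:ℝ) + a = ((N:ℝ) + a) / a * a := by field_simp
        _ ≤ (j:ℝ) * a := mul_le_mul_of_nonneg_right h1 ha.le
        _ = a * j := mul_comm _ _
    have hjpos : (0:ℝ) < j := by exact_mod_cast Nat.pos_of_ne_zero (by omega)
    have hs0 : (0:ℝ) < a * j := mul_pos ha hjpos
    have hkey := my_key a t lam ha ht (N:ℝ) hN1 hNlt.le (a * j) hs0 hsj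
    have hG1 : 0 < Real.Gamma (a * j + 1) := hGj j
    have hG2 : 0 < Real.Gamma (a * j + a + 1) := Real.Gamma_pos_of_pos (by positivity)
    have e : bound (j + 1) = |lam| ^ (j + 1) * (t ^ (a * (j:ℝ)) * t ^ a) *
        (((N:ℝ) + a * (j:ℝ) + a) / N) ^ (a * (j:ℝ) + a) /
          Real.Gamma (a * (j:ℝ) + a + 1) := by
      rw [hbdef]
      push_cast
      rw [show a * ((j:ℝ) + 1) = a * (j:ℝ) + a by ring,
        show (N:ℝ) + (a * (j:ℝ) + a) = (N:ℝ) + a * (j:ℝ) + a by ring,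
        Real.rpow_add ht]
    rw [Real.norm_eq_abs, Real.norm_eq_abs, abs_of_nonneg (hb_nonneg _),
      abs_of_nonneg (hb_nonneg _), e, hbdef]
    rw [show (1:ℝ)/2 * (|lam| ^ j * t ^ (a * (j:ℝ)) * (((N:ℝ) + a * j) / N) ^ (a * j) /
        Real.Gamma (a * j + 1))
      = 1/2 * (|lam| ^ j * t ^ (a * (j:ℝ))) * (((N:ℝ) + a * j) / N) ^ (a * j) /
        Real.Gamma (a * j + 1) by ring,
      div_le_div_iff₀ hG2 hG1]
    have h6 := mul_le_mul_of_nonneg_left hkey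
      (show (0:ℝ) ≤ |lam| ^ j * t ^ (a * (j:ℝ)) by positivity)
    calc |lam| ^ (j + 1) * (t ^ (a * (j:ℝ)) * t ^ a) *
          (((N:ℝ) + a * (j:ℝ) + a) / N) ^ (a * (j:ℝ) + a) * Real.Gamma (a * j + 1)
        = (|lam| ^ j * t ^ (a * (j:ℝ))) * (|lam| * t ^ a *
            (((N:ℝ) + a * (j:ℝ) + a) / N) ^ (a * (j:ℝ) + a) * Real.Gamma (a * j + 1)) := by
          ring
      _ ≤ (|lam| ^ j * t ^ (a * (j:ℝ))) *
            (1/2 * (((N:ℝ) + a * j) / N) ^ (a * j) * Real.Gamma (a * j + a + 1)) := h6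
      _ = 1/2 * (|lam| ^ j * t ^ (a * (j:ℝ))) * (((N:ℝ) + a * j) / N) ^ (a * j) *
            Real.Gamma (a * j + a + 1) := by ring
  exact tendsto_tsum_of_dominated_convergence hsum hterm hbound
end

section
/- For 0 < a ≤ 1, real j ≥ 1, and integer n ≥ 1, Δ_{−n}^{a−1} M(aj; n) = M(aj − a + 1; n), where Δ_{−n}^{a−1} u_n = ε^{1−a} Σ_{k=0}^{n−1} C(a−1, k)(−1)^k u_{n−k}. -/
/-- Generalized binomial coefficient `C(x, k) = x(x−1)⋯(x−k+1)/k!`. -/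
noncomputable def genBinom (x : ℝ) (k : ℕ) : ℝ :=
  (∏ i ∈ Finset.range k, (x - i)) / (Nat.factorial k)

/-- `M ε b n = ε^(b−1) Γ(n+b−1)/(Γ(b)Γ(n))`. -/
noncomputable def M (ε b : ℝ) (n : ℕ) : ℝ :=
  ε ^ (b - 1) * Real.Gamma ((n : ℝ) + b - 1) / (Real.Gamma b * Real.Gamma (n : ℝ))

lemma descPochhammer_smeval_real (x : ℝ) (k : ℕ) :
    (descPochhammer ℤ k).smeval x = ∏ i ∈ Finset.range k, (x - i) := by
  induction k with
  | zero => simp [descPochhammer_zero, Polynomial.smeval_one]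
  | succ k ih =>
    rw [descPochhammer_succ_right, Polynomial.smeval_mul, ih, Finset.prod_range_succ,
      Polynomial.smeval_sub, Polynomial.smeval_X, Polynomial.smeval_natCast]
    ring

lemma genBinom_eq_choose (x : ℝ) (k : ℕ) : genBinom x k = Ring.choose x k := by
  have h := Ring.descPochhammer_eq_factorial_smul_choose x k
  rw [descPochhammer_smeval_real, nsmul_eq_mul] at h
  rw [genBinom, h, mul_div_assoc, mul_comm]
  exact div_mul_cancel₀ _ (by exact_mod_cast Nat.factorial_ne_zero k)

lemma genBinom_vandermonde (x y : ℝ) (m : ℕ) :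
    ∑ k ∈ Finset.range (m + 1), genBinom x k * genBinom y (m - k) = genBinom (x + y) m := by
  simp only [genBinom_eq_choose]
  rw [Ring.add_choose_eq m (Commute.all x y),
    Finset.Nat.sum_antidiagonal_eq_sum_range_succ (fun i j => Ring.choose x i * Ring.choose y j) m]

lemma genBinom_reflect (y : ℝ) (m : ℕ) :
    genBinom ((m : ℝ) - 1 - y) m = (-1) ^ m * genBinom y m := by
  unfold genBinom
  rw [← mul_div_assoc]
  congr 1
  have h : ∀ j ∈ Finset.range m, ((m : ℝ) - 1 - y) - j = -(y - ((m - 1 - j : ℕ) : ℝ)) := by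
    intro j hj
    have hjm : j < m := Finset.mem_range.mp hj
    have : ((m - 1 - j : ℕ) : ℝ) = (m : ℝ) - 1 - j := by
      have : m - 1 - j + (1 + j) = m := by omega
      have := congrArg (fun t : ℕ => (t : ℝ)) this
      push_cast at this
      linarith
    rw [this]; ring
  rw [Finset.prod_congr rfl h]
  have h2 : ∀ j ∈ Finset.range m, -(y - ((m - 1 - j : ℕ) : ℝ)) =
      (-1) * (y - ((m - 1 - j : ℕ) : ℝ)) := by intro j _; ring
  rw [Finset.prod_congr rfl h2, Finset.prod_mul_distrib, Finset.prod_const, Finset.card_range]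
  rw [Finset.prod_range_reflect (fun j => y - (j : ℝ))]

lemma Real.Gamma_add_nat' (x : ℝ) (hx : 0 < x) (m : ℕ) :
    Real.Gamma (x + m) = Real.Gamma x * ∏ j ∈ Finset.range m, (x + j) := by
  induction m with
  | zero => simp
  | succ m ih =>
    have h : x + ((m : ℕ) + 1 : ℕ) = (x + m) + 1 := by push_cast; ring
    rw [h, Real.Gamma_add_one (by positivity), ih, Finset.prod_range_succ]
    ring

lemma M_eq (ε b : ℝ) (hb : 0 < b) (m : ℕ) (hm : 1 ≤ m) :
    M ε b m = ε ^ (b - 1) * genBinom ((m : ℝ) + b - 2) (m - 1) := by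
  obtain ⟨p, rfl⟩ : ∃ p, m = p + 1 := ⟨m - 1, by omega⟩
  have h1 : ((p + 1 : ℕ) : ℝ) + b - 1 = b + p := by push_cast; ring
  have h2 : Real.Gamma ((p + 1 : ℕ) : ℝ) = (Nat.factorial p : ℝ) := by
    push_cast
    exact Real.Gamma_nat_eq_factorial p
  have hΓ : Real.Gamma b ≠ 0 := ne_of_gt (Real.Gamma_pos_of_pos hb)
  have h3 : genBinom ((p + 1 : ℕ) + b - 2) ((p + 1) - 1) =
      (∏ j ∈ Finset.range p, (b + j)) / (Nat.factorial p) := by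
    have h4 : (p + 1) - 1 = p := by omega
    rw [h4, genBinom]
    congr 1
    have h : ∀ j ∈ Finset.range p, ((p + 1 : ℕ) : ℝ) + b - 2 - j = b + ((p - 1 - j : ℕ) : ℝ) := by
      intro j hj
      have hjm : j < p := Finset.mem_range.mp hj
      have : ((p - 1 - j : ℕ) : ℝ) = (p : ℝ) - 1 - j := by
        have : p - 1 - j + (1 + j) = p := by omega
        have := congrArg (fun t : ℕ => (t : ℝ)) this
        push_cast at this
        linarith
      rw [this]; push_cast; ring
    rw [Finset.prod_congr rfl h, Finset.prod_range_reflect (fun j => b + (j : ℝ))]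
  rw [M, h1, h2, h3, Real.Gamma_add_nat' b hb p]
  field_simp

/-- For `0 < a ≤ 1`, real `r ≥ 1`, integer `n ≥ 1`:
`Δ_{−n}^{a−1} M(ar; n) = M(ar − a + 1; n)`. -/
theorem stmt_10 (ε a r : ℝ) (hε : 0 < ε) (ha : 0 < a) (ha1 : a ≤ 1) (hr : 1 ≤ r)
    (n : ℕ) (hn : 1 ≤ n) :
    ε ^ (1 - a) * ∑ k ∈ Finset.range n,
        genBinom (a - 1) k * (-1) ^ k * M ε (a * r) (n - k) =
      M ε (a * r - a + 1) n := by
  set b := a * r with hbdef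
  have hb : 0 < b := mul_pos ha (lt_of_lt_of_le one_pos hr)
  have hb1 : 0 < b - a + 1 := by nlinarith
  obtain ⟨p, rfl⟩ : ∃ p, n = p + 1 := ⟨n - 1, by omega⟩
  have hrw : ∀ k ∈ Finset.range (p + 1),
      genBinom (a - 1) k * (-1) ^ k * M ε b (p + 1 - k) =
      ε ^ (b - 1) * ((-1) ^ p * (genBinom (a - 1) k * genBinom (-b) (p - k))) := by
    intro k hk
    have hkp : k ≤ p := Nat.lt_succ_iff.mp (Finset.mem_range.mp hk)
    have h1 : p + 1 - k = (p - k) + 1 := by omega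
    rw [h1, M_eq ε b hb (p - k + 1) (by omega)]
    have hpk : ((p - k : ℕ) : ℝ) = (p : ℝ) - k := by
      have : p - k + k = p := by omega
      have := congrArg (fun t : ℕ => (t : ℝ)) this
      push_cast at this
      linarith
    have h2 : (p - k + 1) - 1 = p - k := by omega
    have h3 : ((p - k + 1 : ℕ) : ℝ) + b - 2 = ((p - k : ℕ) : ℝ) - 1 - (-b) := by
      push_cast [hpk]; ring
    rw [h2, h3, genBinom_reflect (-b) (p - k)]
    have hsgn : ((-1 : ℝ)) ^ k * (-1) ^ (p - k) = (-1) ^ p := by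
      rw [← pow_add]
      congr 1
      omega
    rw [← hsgn]
    ring
  rw [Finset.sum_congr rfl hrw, ← Finset.mul_sum, ← Finset.mul_sum,
    genBinom_vandermonde (a - 1) (-b) p, M_eq ε (b - a + 1) hb1 (p + 1) (by omega)]
  have h4 : ((p + 1 : ℕ) : ℝ) + (b - a + 1) - 2 = ((p : ℕ) : ℝ) - 1 - (a - 1 + -b) := by
    push_cast; ring
  have h5 : (p + 1) - 1 = p := by omega
  rw [h4, h5, genBinom_reflect (a - 1 + -b) p, ← mul_assoc, ← Real.rpow_add hε]
  ring_nf
end
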